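/- Let U ⊆ ℝ² be open, let ω¹, ω², ω³ : U → ℝ be continuously differentiable and let ξ¹, ξ² : U → ℝ be continuously differentiable. Define Ω¹ := ∂₂ξ¹ + ω¹∂₂ξ² − ω¹∂₁ξ¹ − (ω¹)²∂₁ξ² + Σ_r ξʳ∂_rω¹, Ω² := ∂₁ξ² + ω²∂₁ξ¹ − ω²∂₂ξ² − (ω²)²∂₂ξ¹ + Σ_r ξʳ∂_rω², and Ω³ := ω³(∂₁ξ¹ + ∂₂ξ²) + ω¹ω³∂₁ξ² + ω²ω³∂₂ξ¹ + Σ_r ξʳ∂_rω³. Then (1 − ω¹ω²)·Ω³ − ω²ω³·Ω¹ − ω¹ω³·Ω² = ω³(1 − ω¹ω²)·(∂₁ξ¹ + ∂₂ξ²) + Σ_r ξʳ·∂_r(ω³(1 − ω¹ω²)) on U. In particular, if Ω¹ = Ω² = Ω³ = 0 on U, then ω³(1 − ω¹ω²)·(∂₁ξ¹ + ∂₂ξ²) + Σ_r ξʳ·∂_r(ω³(1 − ω¹ω²)) = 0 on U. -/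

import Mathlib

/-- First partial derivative of a function on `ℝ²`. -/
noncomputable def pd1 (f : ℝ × ℝ → ℝ) (p : ℝ × ℝ) : ℝ :=
  deriv (fun t => f (t, p.2)) p.1

/-- Second partial derivative of a function on `ℝ²`. -/
noncomputable def pd2 (f : ℝ × ℝ → ℝ) (p : ℝ × ℝ) : ℝ :=
  deriv (fun t => f (p.1, t)) p.2

lemma slice1_diff {U : Set (ℝ × ℝ)} (hU : IsOpen U) {f : ℝ × ℝ → ℝ}
    (hf : ContDiffOn ℝ 1 f U) {p : ℝ × ℝ} (hp : p ∈ U) :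
    DifferentiableAt ℝ (fun t => f (t, p.2)) p.1 := by
  have hfd : DifferentiableAt ℝ f p :=
    (hf.differentiableOn one_ne_zero).differentiableAt (hU.mem_nhds hp)
  have hmk : DifferentiableAt ℝ (fun t : ℝ => (t, p.2)) p.1 :=
    differentiableAt_id.prodMk (differentiableAt_const _)
  have := (hfd.comp p.1 (by simpa using hmk) : DifferentiableAt ℝ (f ∘ fun t : ℝ => (t, p.2)) p.1)
  · exact this

lemma slice2_diff {U : Set (ℝ × ℝ)} (hU : IsOpen U) {f : ℝ × ℝ → ℝ}
    (hf : ContDiffOn ℝ 1 f U) {p : ℝ × ℝ} (hp : p ∈ U) :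
    DifferentiableAt ℝ (fun t => f (p.1, t)) p.2 := by
  have hfd : DifferentiableAt ℝ f p :=
    (hf.differentiableOn one_ne_zero).differentiableAt (hU.mem_nhds hp)
  have hmk : DifferentiableAt ℝ (fun t : ℝ => (p.1, t)) p.2 :=
    (differentiableAt_const _).prodMk differentiableAt_id
  have := (hfd.comp p.2 (by simpa using hmk) : DifferentiableAt ℝ (f ∘ fun t : ℝ => (p.1, t)) p.2)
  · exact this

lemma pd1_prod {U : Set (ℝ × ℝ)} (hU : IsOpen U) {ω1 ω2 ω3 : ℝ × ℝ → ℝ}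
    (hω1 : ContDiffOn ℝ 1 ω1 U) (hω2 : ContDiffOn ℝ 1 ω2 U) (hω3 : ContDiffOn ℝ 1 ω3 U)
    {p : ℝ × ℝ} (hp : p ∈ U) :
    pd1 (fun q => ω3 q * (1 - ω1 q * ω2 q)) p
      = pd1 ω3 p * (1 - ω1 p * ω2 p)
        - ω3 p * (pd1 ω1 p * ω2 p + ω1 p * pd1 ω2 p) := by
  have h1 := slice1_diff hU hω1 hp
  have h2 := slice1_diff hU hω2 hp
  have h3 := slice1_diff hU hω3 hp
  unfold pd1
  beta_reduce
  rw [deriv_fun_mul h3 (((differentiableAt_const _).fun_sub (h1.fun_mul h2))),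
    deriv_fun_sub (differentiableAt_const _) (h1.fun_mul h2), deriv_const, deriv_fun_mul h1 h2]
  ring

lemma pd2_prod {U : Set (ℝ × ℝ)} (hU : IsOpen U) {ω1 ω2 ω3 : ℝ × ℝ → ℝ}
    (hω1 : ContDiffOn ℝ 1 ω1 U) (hω2 : ContDiffOn ℝ 1 ω2 U) (hω3 : ContDiffOn ℝ 1 ω3 U)
    {p : ℝ × ℝ} (hp : p ∈ U) :
    pd2 (fun q => ω3 q * (1 - ω1 q * ω2 q)) p
      = pd2 ω3 p * (1 - ω1 p * ω2 p)
        - ω3 p * (pd2 ω1 p * ω2 p + ω1 p * pd2 ω2 p) := by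
  have h1 := slice2_diff hU hω1 hp
  have h2 := slice2_diff hU hω2 hp
  have h3 := slice2_diff hU hω3 hp
  unfold pd2
  beta_reduce
  rw [deriv_fun_mul h3 (((differentiableAt_const _).fun_sub (h1.fun_mul h2))),
    deriv_fun_sub (differentiableAt_const _) (h1.fun_mul h2), deriv_const, deriv_fun_mul h1 h2]
  ring

theorem stmt16 (U : Set (ℝ × ℝ)) (hU : IsOpen U)
    (ω1 ω2 ω3 ξ1 ξ2 : ℝ × ℝ → ℝ)
    (hω1 : ContDiffOn ℝ 1 ω1 U) (hω2 : ContDiffOn ℝ 1 ω2 U)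
    (hω3 : ContDiffOn ℝ 1 ω3 U)
    (hξ1 : ContDiffOn ℝ 1 ξ1 U) (hξ2 : ContDiffOn ℝ 1 ξ2 U) :
    let Ω1 : ℝ × ℝ → ℝ := fun p =>
      pd2 ξ1 p + ω1 p * pd2 ξ2 p - ω1 p * pd1 ξ1 p - (ω1 p) ^ 2 * pd1 ξ2 p
        + (ξ1 p * pd1 ω1 p + ξ2 p * pd2 ω1 p)
    let Ω2 : ℝ × ℝ → ℝ := fun p =>
      pd1 ξ2 p + ω2 p * pd1 ξ1 p - ω2 p * pd2 ξ2 p - (ω2 p) ^ 2 * pd2 ξ1 p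
        + (ξ1 p * pd1 ω2 p + ξ2 p * pd2 ω2 p)
    let Ω3 : ℝ × ℝ → ℝ := fun p =>
      ω3 p * (pd1 ξ1 p + pd2 ξ2 p) + ω1 p * ω3 p * pd1 ξ2 p + ω2 p * ω3 p * pd2 ξ1 p
        + (ξ1 p * pd1 ω3 p + ξ2 p * pd2 ω3 p)
    (∀ p ∈ U,
      (1 - ω1 p * ω2 p) * Ω3 p - ω2 p * ω3 p * Ω1 p - ω1 p * ω3 p * Ω2 p
        = ω3 p * (1 - ω1 p * ω2 p) * (pd1 ξ1 p + pd2 ξ2 p)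
          + (ξ1 p * pd1 (fun q => ω3 q * (1 - ω1 q * ω2 q)) p
              + ξ2 p * pd2 (fun q => ω3 q * (1 - ω1 q * ω2 q)) p)) ∧
    ((∀ p ∈ U, Ω1 p = 0 ∧ Ω2 p = 0 ∧ Ω3 p = 0) →
      ∀ p ∈ U,
        ω3 p * (1 - ω1 p * ω2 p) * (pd1 ξ1 p + pd2 ξ2 p)
          + (ξ1 p * pd1 (fun q => ω3 q * (1 - ω1 q * ω2 q)) p
              + ξ2 p * pd2 (fun q => ω3 q * (1 - ω1 q * ω2 q)) p) = 0) := by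
  intro Ω1 Ω2 Ω3
  have key : ∀ p ∈ U,
      (1 - ω1 p * ω2 p) * Ω3 p - ω2 p * ω3 p * Ω1 p - ω1 p * ω3 p * Ω2 p
        = ω3 p * (1 - ω1 p * ω2 p) * (pd1 ξ1 p + pd2 ξ2 p)
          + (ξ1 p * pd1 (fun q => ω3 q * (1 - ω1 q * ω2 q)) p
              + ξ2 p * pd2 (fun q => ω3 q * (1 - ω1 q * ω2 q)) p) := by
    intro p hp
    rw [pd1_prod hU hω1 hω2 hω3 hp, pd2_prod hU hω1 hω2 hω3 hp]
    simp only [Ω1, Ω2, Ω3]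
    ring
  refine ⟨key, fun h p hp => ?_⟩
  have := key p hp
  obtain ⟨e1, e2, e3⟩ := h p hp
  rw [e1, e2, e3] at this
  linarith [this]
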